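/- Let H and K be real Hilbert spaces, let F : H → K be a continuous linear map that is an isometry (‖F x‖ = ‖x‖ for all x) with adjoint F*, and let Q : H → H be the orthogonal projection onto a closed subspace S of H. Let β₁, β₂ > 0, y, Λ₁ ∈ K, z, Λ₂ ∈ H, and g ∈ H. Set b = β₁·F* y + β₂·z + F* Λ₁ + Λ₂. Then the unique minimizer of x ↦ (β₁/2)·‖y − F x + (1/β₁)·Λ₁‖² + (β₂/2)·‖z − x + (1/β₂)·Λ₂‖² over the affine set {x ∈ H : Q x = Q g} is x* = Q g + (1/(β₁ + β₂))·(b − Q b). -/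

import Mathlib

open scoped RealInnerProductSpace


/-- Closed-form solution of the constrained ADMM `x`-subproblem in the spherical
inpainting model: for a bounded linear isometry `F` between real Hilbert spaces and
the orthogonal projection `Q` onto a closed (complete) subspace `S`, the unique
minimizer of `x ↦ (β₁/2)‖y − Fx + Λ₁/β₁‖² + (β₂/2)‖z − x + Λ₂/β₂‖²` over the affine
set `{x : Qx = Qg}` is `x* = Qg + (b − Qb)/(β₁ + β₂)` where
`b = β₁·F*y + β₂·z + F*Λ₁ + Λ₂`. -/
theorem admm_x_subproblem_constrained {H K : Type*}
    [NormedAddCommGroup H] [InnerProductSpace ℝ H] [CompleteSpace H]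
    [NormedAddCommGroup K] [InnerProductSpace ℝ K] [CompleteSpace K]
    (F : H →L[ℝ] K) (hF : ∀ x, ‖F x‖ = ‖x‖)
    (S : Submodule ℝ H) [CompleteSpace S]
    (Q : H → H) (hQ : ∀ x, Q x = (S.orthogonalProjectionOnto x : H))
    (β₁ β₂ : ℝ) (hβ₁ : 0 < β₁) (hβ₂ : 0 < β₂)
    (y Λ₁ : K) (z Λ₂ : H) (g : H)
    (b : H)
    (hb : b = β₁ • (ContinuousLinearMap.adjoint F) y + β₂ • z
      + (ContinuousLinearMap.adjoint F) Λ₁ + Λ₂)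
    (J : H → ℝ)
    (hJ : ∀ x, J x = (β₁ / 2) * ‖y - F x + (1 / β₁) • Λ₁‖ ^ 2
      + (β₂ / 2) * ‖z - x + (1 / β₂) • Λ₂‖ ^ 2)
    (xstar : H)
    (hxstar : xstar = Q g + (1 / (β₁ + β₂)) • (b - Q b)) :
    Q xstar = Q g ∧
      ∀ x, Q x = Q g → (J xstar ≤ J x ∧ (J x = J xstar → x = xstar)) := by
  have hβ : (0:ℝ) < β₁ + β₂ := by linarith
  set β := β₁ + β₂ with hβdef
  -- inner product preservation
  have hFi : ∀ u v : H, ⟪F u, F v⟫ = ⟪u, v⟫ := by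
    intro u v
    exact (LinearIsometry.inner_map_map ⟨F.toLinearMap, hF⟩ u v)
  have hadj : ∀ u : H, (ContinuousLinearMap.adjoint F) (F u) = u := by
    intro u
    apply ext_inner_right ℝ
    intro v
    rw [ContinuousLinearMap.adjoint_inner_left, hFi]
  -- Q facts
  have hQadd : ∀ a c : H, Q (a + c) = Q a + Q c := by
    intro a c; simp [hQ, map_add]
  have hQsmul : ∀ (r : ℝ) (a : H), Q (r • a) = r • Q a := by
    intro r a; simp [hQ, map_smul]
  have hQsub : ∀ a c : H, Q (a - c) = Q a - Q c := by
    intro a c; simp [hQ, map_sub]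
  have hQidem : ∀ a : H, Q (Q a) = Q a := by
    intro a
    rw [hQ a, hQ]
    exact congrArg _ (Submodule.orthogonalProjectionOnto_mem_subspace_eq_self _)
  have hQmem : ∀ a : H, Q a ∈ S := fun a => by rw [hQ]; exact (S.orthogonalProjectionOnto a).2
  have horth : ∀ w : H, Q w = 0 → ∀ s ∈ S, ⟪s, w⟫ = 0 := by
    intro w hw s hs
    have : w ∈ Sᗮ := by
      rw [← Submodule.orthogonalProjectionOnto_eq_zero_iff (K := S)]
      ext
      simpa [hQ] using hw
    exact (this s hs).symm ▸ (Submodule.mem_orthogonal S w).mp this s hs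
  -- Q xstar = Q g
  have hQx : Q xstar = Q g := by
    rw [hxstar, hQadd, hQidem, hQsmul, hQsub, hQidem, sub_self, smul_zero, add_zero]
  refine ⟨hQx, ?_⟩
  -- quadratic form
  have hJ' : ∀ x : H, J x = β / 2 * ‖x‖ ^ 2 - ⟪b, x⟫
      + ((β₁ / 2) * ‖y + (1/β₁) • Λ₁‖ ^ 2 + (β₂ / 2) * ‖z + (1/β₂) • Λ₂‖ ^ 2) := by
    intro x
    have e1 : y - F x + (1 / β₁) • Λ₁ = (y + (1/β₁) • Λ₁) - F x := by abel
    have e2 : z - x + (1 / β₂) • Λ₂ = (z + (1/β₂) • Λ₂) - x := by abel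
    rw [hJ, e1, e2, norm_sub_sq_real, norm_sub_sq_real, hF]
    have i1 : ⟪y + (1/β₁) • Λ₁, F x⟫ = ⟪(ContinuousLinearMap.adjoint F) y
        + (1/β₁) • (ContinuousLinearMap.adjoint F) Λ₁, x⟫ := by
      rw [← ContinuousLinearMap.adjoint_inner_left]
      simp [map_add, map_smul]
    have ib : ⟪b, x⟫ = β₁ * ⟪(ContinuousLinearMap.adjoint F) y, x⟫
        + β₂ * ⟪z, x⟫ + ⟪(ContinuousLinearMap.adjoint F) Λ₁, x⟫ + ⟪Λ₂, x⟫ := by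
      rw [hb]
      simp [inner_add_left, real_inner_smul_left]
    rw [i1]
    simp only [inner_add_left, real_inner_smul_left] at *
    rw [ib]
    field_simp
    ring
  intro x hx
  -- orthogonality of increment
  have hw : Q (x - xstar) = 0 := by rw [hQsub, hx, hQx, sub_self]
  have hkey : ⟪β • xstar - b, x - xstar⟫ = 0 := by
    have hmem : β • xstar - b ∈ S := by
      have : β • xstar - b = β • Q g - Q b := by
        rw [hxstar, smul_add, smul_smul]
        rw [mul_one_div, div_self hβ.ne', one_smul]
        abel
      rw [this]
      exact Submodule.sub_mem S (Submodule.smul_mem S β (hQmem g)) (hQmem b)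
    exact horth _ hw _ hmem
  have hdiff : J x = J xstar + β / 2 * ‖x - xstar‖ ^ 2 := by
    rw [hJ' x, hJ' xstar, norm_sub_sq_real]
    have hk : β * ⟪xstar, x⟫ - β * ⟪xstar, xstar⟫ - ⟪b, x⟫ + ⟪b, xstar⟫ = 0 := by
      have := hkey
      simp only [inner_sub_left, inner_sub_right, real_inner_smul_left] at this
      linarith
    have hnorm : ‖xstar‖ ^ 2 = ⟪xstar, xstar⟫ := (real_inner_self_eq_norm_sq xstar).symm
    rw [hnorm, real_inner_comm xstar x]
    linear_combination hk
  constructor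
  · rw [hdiff]; nlinarith [sq_nonneg ‖x - xstar‖]
  · intro hJeq
    rw [hdiff] at hJeq
    have : ‖x - xstar‖ ^ 2 = 0 := by nlinarith
    have := pow_eq_zero_iff (n := 2) (by norm_num) |>.mp this
    rw [norm_eq_zero] at this
    exact sub_eq_zero.mp this
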